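/- For every real number x that is not an integer multiple of 2π, the Abel (Euler) sum of the series ∑_{n=1}^∞ sin(nx) exists and equals sin x / (2(1 − cos x)); that is, lim_{r→1⁻} ∑_{n=1}^∞ rⁿ sin(nx) = sin x / (2(1 − cos x)). -/

import Mathlib

open Filter Real Topology

lemma abel_sin_aux (x r : ℝ) (hr : |r| < 1) :
    ∑' n : ℕ, r ^ (n + 1) * Real.sin ((n + 1) * x)
      = r * Real.sin x / (1 - 2 * r * Real.cos x + r ^ 2) := by
  set z : ℂ := (r : ℂ) * Complex.exp (x * Complex.I) with hz
  have hre : z.re = r * Real.cos x := by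
    simp [hz, Complex.mul_re, Complex.exp_ofReal_mul_I_re, Complex.exp_ofReal_mul_I_im]
  have him0 : z.im = r * Real.sin x := by
    simp [hz, Complex.mul_im, Complex.exp_ofReal_mul_I_re, Complex.exp_ofReal_mul_I_im]
  have hzn : ‖z‖ < 1 := by
    have : ‖z‖ = |r| := by
      simp [hz, map_mul, Complex.norm_exp_ofReal_mul_I, Complex.norm_real]
    rw [this]; exact hr
  have hgeo : HasSum (fun n : ℕ => z * z ^ n) (z * (1 - z)⁻¹) :=
    (hasSum_geometric_of_norm_lt_one hzn).mul_left z
  have him : HasSum (fun n : ℕ => (z * z ^ n).im) ((z * (1 - z)⁻¹).im) :=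
    ((Complex.hasSum_iff _ _).1 hgeo).2
  have heq : ∀ n : ℕ, (z * z ^ n).im = r ^ (n + 1) * Real.sin ((n + 1) * x) := by
    intro n
    have h1 : z * z ^ n = ((r : ℂ) ^ (n + 1)) *
        Complex.exp (((((n : ℝ) + 1) * x) : ℝ) * Complex.I) := by
      rw [← pow_succ', hz, mul_pow, ← Complex.exp_nat_mul]
      push_cast
      ring_nf
    rw [h1, Complex.mul_im, ← Complex.ofReal_pow, Complex.ofReal_im, Complex.ofReal_re,
      Complex.exp_ofReal_mul_I_im]
    ring
  have hden : (1 : ℝ) - 2 * r * Real.cos x + r ^ 2 ≠ 0 := by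
    obtain ⟨hr1, hr2⟩ := abs_lt.1 hr
    have hpos : 0 < 1 - 2 * r * Real.cos x + r ^ 2 := by
      rcases le_or_gt 0 r with h0 | h0
      · nlinarith [mul_nonneg h0 (sub_nonneg.2 (Real.cos_le_one x)),
          mul_pos (by linarith : (0:ℝ) < 1 - r) (by linarith : (0:ℝ) < 1 - r)]
      · nlinarith [mul_nonneg (by linarith : (0:ℝ) ≤ -(2*r))
          (by linarith [Real.neg_one_le_cos x] : (0:ℝ) ≤ 1 + Real.cos x),
          mul_pos (by linarith : (0:ℝ) < 1 + r) (by linarith : (0:ℝ) < 1 + r)]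
    exact ne_of_gt hpos
  have hval : (z * (1 - z)⁻¹).im = r * Real.sin x / (1 - 2 * r * Real.cos x + r ^ 2) := by
    have hns : Complex.normSq (1 - z) = 1 - 2 * r * Real.cos x + r ^ 2 := by
      simp only [Complex.normSq_apply, Complex.sub_re, Complex.sub_im, Complex.one_re,
        Complex.one_im, hre, him0]
      nlinarith [Real.sin_sq_add_cos_sq x]
    rw [Complex.mul_im, Complex.inv_re, Complex.inv_im, hns, Complex.sub_re, Complex.sub_im,
      Complex.one_re, Complex.one_im, hre, him0]
    field_simp
    ring
  have := him.tsum_eq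
  rw [hval] at this
  rw [← this]
  exact tsum_congr fun n => (heq n).symm

theorem abel_sum_sin (x : ℝ) (hx : ∀ k : ℤ, x ≠ 2 * Real.pi * k) :
    Tendsto (fun r : ℝ => ∑' n : ℕ, r ^ (n + 1) * Real.sin ((n + 1) * x))
      (nhdsWithin 1 (Set.Iio 1))
      (nhds (Real.sin x / (2 * (1 - Real.cos x)))) := by
  have hcos : Real.cos x ≠ 1 := by
    intro h
    rcases Real.cos_eq_one_iff x |>.1 h with ⟨n, hn⟩
    exact hx n (by linarith [hn])
  have hd : (1 : ℝ) - 2 * 1 * Real.cos x + 1 ^ 2 ≠ 0 := by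
    intro h
    apply hcos
    nlinarith
  have hcont : Tendsto (fun r : ℝ => r * Real.sin x / (1 - 2 * r * Real.cos x + r ^ 2))
      (nhdsWithin 1 (Set.Iio 1)) (nhds (Real.sin x / (2 * (1 - Real.cos x)))) := by
    have h1 : ContinuousAt (fun r : ℝ => r * Real.sin x / (1 - 2 * r * Real.cos x + r ^ 2)) 1 := by
      apply ContinuousAt.div
      · fun_prop
      · fun_prop
      · exact hd
    have h2 : (1 : ℝ) * Real.sin x / (1 - 2 * 1 * Real.cos x + 1 ^ 2)
        = Real.sin x / (2 * (1 - Real.cos x)) := by ring_nf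
    have h3 : Tendsto (fun r : ℝ => r * Real.sin x / (1 - 2 * r * Real.cos x + r ^ 2))
        (nhdsWithin 1 (Set.Iio 1))
        (nhds (1 * Real.sin x / (1 - 2 * 1 * Real.cos x + 1 ^ 2))) :=
      tendsto_nhdsWithin_of_tendsto_nhds h1.tendsto
    rwa [h2] at h3
  apply hcont.congr'
  filter_upwards [Ioo_mem_nhdsLT_of_mem (by norm_num : (1:ℝ) ∈ Set.Ioc (-1) 1)] with r hr
  exact (abel_sin_aux x r (abs_lt.2 ⟨hr.1, hr.2⟩)).symm
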